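/- Let d be coprime to p^n − 1 with d ≡ 1 (mod p − 1), and consider the p-ary cyclic code whose codewords are c_{a,b} = (Tr(aα^t + bα^{dt}))_{t=0}^{p^n−2} for a, b ∈ F_{p^n}. Then every nonzero codeword c_{a,b} with b ≠ 0 has Hamming weight (p − 1)(p^n − W_d(c))/p for some c ∈ F_{p^n}, where W_d(c) = ∑_{x ∈ F_{p^n}} ω^{Tr(x^d − cx)}. -/

import Mathlib

noncomputable instance (p n : ℕ) [Fact p.Prime] : Fintype (GaloisField p n) :=
  Fintype.ofFinite _

/-- `ω = exp(2πi/p)` raised to (the integer lift of) an element of `F_p`. -/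
noncomputable def ew (p : ℕ) (x : ZMod p) : ℂ :=
  Complex.exp (2 * Real.pi * Complex.I / p) ^ x.val

/-- The absolute trace from `F_{p^n}` to `F_p`. -/
noncomputable def Tr (p n : ℕ) [Fact p.Prime] (x : GaloisField p n) : ZMod p :=
  Algebra.trace (ZMod p) (GaloisField p n) x

open Finset

section Ew
variable (p : ℕ) [hp : Fact p.Prime]

lemma zeta_pow_p : Complex.exp (2 * Real.pi * Complex.I / p) ^ p = 1 :=
  (Complex.isPrimitiveRoot_exp p hp.1.ne_zero).pow_eq_one

noncomputable def ewChar : AddChar (ZMod p) ℂ :=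
  AddChar.zmodChar p (zeta_pow_p p)

lemma ew_eq_char (x : ZMod p) : ew p x = ewChar p x := rfl

lemma ew_zero : ew p 0 = 1 := by rw [ew_eq_char]; exact AddChar.map_zero_eq_one _

lemma sum_ew : ∑ u : ZMod p, ew p u = 0 := by
  simp only [ew_eq_char]
  apply AddChar.sum_eq_zero_of_ne_one
  intro h
  have h1 : ewChar p 1 = 1 := by rw [h]; rfl
  have : (1 : ZMod p).val = 1 := ZMod.val_one_eq_one_mod p ▸ by
    simpa using Nat.mod_eq_of_lt hp.1.one_lt
  rw [ewChar, AddChar.zmodChar_apply, this, pow_one] at h1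
  exact (Complex.isPrimitiveRoot_exp p hp.1.ne_zero).ne_one hp.1.one_lt h1

lemma sum_ew_mul (z : ZMod p) :
    ∑ u : ZMod p, ew p (u * z) = if z = 0 then (p : ℂ) else 0 := by
  split_ifs with hz
  · simp [hz, ew_zero, ZMod.card]
  · rw [← sum_ew p]
    exact Fintype.sum_equiv (Equiv.mulRight₀ z hz) _ _ (fun u => rfl)

lemma count_card {X : Type*} [Fintype X] (g : X → ZMod p)
    (hinv : ∀ u : ZMod p, u ≠ 0 → ∑ x, ew p (u * g x) = ∑ x, ew p (g x)) :
    ((univ.filter fun x => g x ≠ 0).card : ℂ)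
      = (p - 1) * ((Fintype.card X : ℂ) - ∑ x, ew p (g x)) / p := by
  set W : ℂ := ∑ x, ew p (g x) with hW
  have key : (p : ℂ) * (univ.filter fun x => g x = 0).card
      = (Fintype.card X : ℂ) + ((p : ℂ) - 1) * W := by
    have lhs : ∑ x : X, ∑ u : ZMod p, ew p (u * g x)
        = (p : ℂ) * (univ.filter fun x => g x = 0).card := by
      rw [Finset.sum_congr rfl (fun x _ => sum_ew_mul p (g x))]
      rw [Finset.sum_ite, Finset.sum_const, Finset.sum_const, smul_zero, add_zero]
      simp [mul_comm]
    have rhs : ∑ u : ZMod p, ∑ x : X, ew p (u * g x)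
        = (Fintype.card X : ℂ) + ((p : ℂ) - 1) * W := by
      rw [← Finset.add_sum_erase _ _ (mem_univ (0 : ZMod p))]
      have h0 : ∑ x : X, ew p ((0 : ZMod p) * g x) = (Fintype.card X : ℂ) := by
        simp [ew_zero]
      have h1 : ∑ u ∈ univ.erase (0 : ZMod p), ∑ x : X, ew p (u * g x)
          = ((p : ℂ) - 1) * W := by
        rw [Finset.sum_congr rfl (fun u hu => hinv u (Finset.mem_erase.mp hu).1)]
        rw [Finset.sum_const, Finset.card_erase_of_mem (mem_univ _), Finset.card_univ,
          ZMod.card, nsmul_eq_mul, Nat.cast_sub hp.1.one_le]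
        push_cast
        ring
      rw [h0, h1]
    rw [← lhs, Finset.sum_comm, rhs]
  have hsplit : ((univ.filter fun x => g x = 0).card : ℂ)
      + ((univ.filter fun x => g x ≠ 0).card : ℂ) = (Fintype.card X : ℂ) := by
    rw [← Nat.cast_add]
    norm_cast
    rw [Finset.card_filter_add_card_filter_not, Finset.card_univ]
  have hp0 : (p : ℂ) ≠ 0 := by exact_mod_cast hp.1.ne_zero
  field_simp
  linear_combination (p : ℂ) * hsplit - key

lemma zmod_pow_eq_self {d : ℕ} (hd : 0 < d) (hcong : d % (p - 1) = 1 % (p - 1))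
    (u : ZMod p) (hu : u ≠ 0) : u ^ d = u := by
  have h1 : u ^ (p - 1) = 1 := ZMod.pow_card_sub_one_eq_one hu
  have hdvd : (p - 1) ∣ d - 1 := (Nat.modEq_iff_dvd' hd).mp hcong.symm
  obtain ⟨k, hk⟩ := hdvd
  have : d = (p - 1) * k + 1 := by omega
  rw [this, pow_add, pow_mul, h1, one_pow, one_mul, pow_one]

end Ew


/-- Weights of the cyclic code with nonzeros `α^{-1}, α^{-d}`: if
`d ≡ 1 (mod p-1)` and `gcd(d, p^n - 1) = 1`, every codeword `c_{a,b}` with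
`b ≠ 0` has Hamming weight `(p-1)(p^n - W_d(c))/p` for some `c ∈ F_{p^n}`. -/
theorem cyclic_code_weight_walsh (p n : ℕ) [Fact p.Prime] (hn : 1 ≤ n)
    (α : GaloisField p n) (hα : orderOf α = p ^ n - 1)
    (d : ℕ) (hd : 0 < d) (hgcd : Nat.gcd d (p ^ n - 1) = 1)
    (hcong : d % (p - 1) = 1 % (p - 1)) :
    ∀ a b : GaloisField p n, b ≠ 0 →
      ∃ c : GaloisField p n,
        (Nat.card {t : ℕ // t < p ^ n - 1 ∧
            Tr p n (a * α ^ t + b * α ^ (d * t)) ≠ 0} : ℂ)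
          = (p - 1) * ((p : ℂ) ^ n
              - ∑ x : GaloisField p n, ew p (Tr p n (x ^ d - c * x))) / p := by
  intro a b hb
  classical
  have hp : Fact p.Prime := inferInstance
  have hn0 : n ≠ 0 := by omega
  have hcard : Fintype.card (GaloisField p n) = p ^ n := by
    have := GaloisField.card p n hn0
    rwa [Nat.card_eq_fintype_card] at this
  have hq1 : 1 < p ^ n := Nat.one_lt_pow hn0 hp.1.one_lt
  have hq0 : 0 < p ^ n - 1 := by omega
  have hα0 : α ≠ 0 := by
    intro h
    have h1 : (0 : GaloisField p n) ^ (p ^ n - 1) = 1 := by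
      rw [← h, ← hα]; exact pow_orderOf_eq_one α
    rw [zero_pow (by omega : p ^ n - 1 ≠ 0)] at h1
    exact zero_ne_one h1
  have hcardu : Nat.card  (GaloisField p n)ˣ = p ^ n - 1 := by
    rw [Nat.card_eq_fintype_card, Fintype.card_units, hcard]
  -- obtain e with e ^ d = b
  have hcop : (Nat.card  (GaloisField p n)ˣ).Coprime d := by
    rw [hcardu, Nat.coprime_comm]; exact hgcd
  obtain ⟨eu, heu⟩ := hcop.pow_left_bijective.surjective (Units.mk0 b hb)
  set e : GaloisField p n := (eu : GaloisField p n) with he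
  have he0 : e ≠ 0 := eu.ne_zero
  have hed : e ^ d = b := by
    have := congrArg (Units.val) heu
    rwa [Units.val_pow_eq_pow_val, Units.val_mk0] at this
  set c : GaloisField p n := -a * e⁻¹ with hc
  refine ⟨c, ?_⟩
  -- every nonzero element is a power of α
  have hgen : ∀ x : GaloisField p n, x ≠ 0 → ∃ t, t < p ^ n - 1 ∧ α ^ t = x := by
    intro x hx
    set uα :  (GaloisField p n)ˣ := Units.mk0 α hα0 with huα
    have hou : orderOf uα = p ^ n - 1 := by
      rw [← orderOf_units, Units.val_mk0, hα]
    have htop : ∀ v :  (GaloisField p n)ˣ, v ∈ Subgroup.zpowers uα := by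
      intro v
      have h1 : Nat.card (Subgroup.zpowers uα) = Nat.card (GaloisField p n)ˣ := by
        rw [Nat.card_zpowers, hou, hcardu]
      rw [Subgroup.eq_top_of_card_eq _ h1]
      trivial
    obtain ⟨m, hm⟩ := mem_powers_iff_mem_zpowers.mpr (htop (Units.mk0 x hx))
    refine ⟨m % (p ^ n - 1), Nat.mod_lt _ hq0, ?_⟩
    have : α ^ (m % (p ^ n - 1)) = α ^ m := by
      conv_lhs => rw [← hα]
      exact pow_mod_orderOf α m
    rw [this]
    have := congrArg (Units.val) hm
    rwa [Units.val_pow_eq_pow_val, Units.val_mk0, Units.val_mk0] at this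
  -- key algebraic identity
  have hkey : ∀ t : ℕ, (e * α ^ t) ^ d - c * (e * α ^ t)
      = a * α ^ t + b * α ^ (d * t) := by
    intro t
    have h1 : (e * α ^ t) ^ d = b * α ^ (d * t) := by
      rw [mul_pow, hed, ← pow_mul, mul_comm t d]
    rw [h1, hc]
    have h2 : -a * e⁻¹ * (e * α ^ t) = -(a * α ^ t) := by
      field_simp
    rw [h2]
    ring
  -- Tr of zero
  have hTr0 : Tr p n 0 = 0 := by
    unfold Tr; exact map_zero _
  -- the bijection
  have h1 : Nat.card {t : ℕ // t < p ^ n - 1 ∧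
        Tr p n (a * α ^ t + b * α ^ (d * t)) ≠ 0}
      = (univ.filter fun y : GaloisField p n => Tr p n (y ^ d - c * y) ≠ 0).card := by
    have hFbij : Function.Bijective
        (fun t : {t : ℕ // t < p ^ n - 1 ∧ Tr p n (a * α ^ t + b * α ^ (d * t)) ≠ 0} =>
          (⟨e * α ^ t.1, by rw [hkey]; exact t.2.2⟩ :
            {y : GaloisField p n // Tr p n (y ^ d - c * y) ≠ 0})) := by
      constructor
      · rintro ⟨t₁, ht₁, _⟩ ⟨t₂, ht₂, _⟩ h
        have h' : e * α ^ t₁ = e * α ^ t₂ := congrArg Subtype.val h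
        have := mul_left_cancel₀ he0 h'
        have heq : t₁ = t₂ := pow_injOn_Iio_orderOf
          (by rw [hα]; exact ht₁) (by rw [hα]; exact ht₂) this
        exact Subtype.ext heq
      · rintro ⟨y, hy⟩
        have hy0 : y ≠ 0 := by
          intro h
          apply hy
          rw [h, zero_pow hd.ne', mul_zero, sub_zero, hTr0]
        obtain ⟨t, ht, hαt⟩ := hgen (e⁻¹ * y) (by
          exact mul_ne_zero (inv_ne_zero he0) hy0)
        refine ⟨⟨t, ht, ?_⟩, ?_⟩
        · rw [← hkey, hαt]
          have : e * (e⁻¹ * y) = y := by field_simp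
          rw [this]
          exact hy
        · apply Subtype.ext
          show e * α ^ t = y
          rw [hαt]
          field_simp
    rw [Nat.card_congr (Equiv.ofBijective _ hFbij), Nat.card_eq_fintype_card,
      Fintype.card_subtype]
  rw [h1]
  -- character sum invariance
  have hinv : ∀ u : ZMod p, u ≠ 0 →
      ∑ y : GaloisField p n, ew p (u * Tr p n (y ^ d - c * y)) = ∑ y : GaloisField p n, ew p (Tr p n (y ^ d - c * y)) := by
    intro u hu
    set v : GaloisField p n := algebraMap (ZMod p) (GaloisField p n) u with hv
    have hv0 : v ≠ 0 := by
      intro h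
      exact hu ((map_eq_zero (algebraMap (ZMod p) (GaloisField p n))).mp h)
    have hvd : v ^ d = v := by
      rw [hv, ← map_pow, zmod_pow_eq_self p hd hcong u hu]
    have hgu : ∀ y : GaloisField p n, Tr p n ((v * y) ^ d - c * (v * y))
        = u * Tr p n (y ^ d - c * y) := by
      intro y
      have h2 : (v * y) ^ d - c * (v * y) = v * (y ^ d - c * y) := by
        rw [mul_pow, hvd]; ring
      rw [h2]
      unfold Tr
      rw [← Algebra.smul_def, map_smul, smul_eq_mul]
    calc ∑ y : GaloisField p n, ew p (u * Tr p n (y ^ d - c * y))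
        = ∑ y : GaloisField p n, ew p (Tr p n ((v * y) ^ d - c * (v * y))) := by
          simp only [hgu]
      _ = ∑ y : GaloisField p n, ew p (Tr p n (y ^ d - c * y)) :=
          Fintype.sum_equiv (Equiv.mulLeft₀ v hv0) _ _ (fun y => rfl)
  have := count_card p (fun y : GaloisField p n => Tr p n (y ^ d - c * y)) hinv
  rw [this, hcard]
  push_cast
  ring
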